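/- arXiv:1304.2412 — 8 statements merged into one kernel-verified Lean document; each statement's English description precedes it below -/
import Mathlib

section
/- For every finite family S₁,…,Sₙ of subsets of a set D, there exists a subset Δ ⊆ D with |Δ| ≤ n − 1 such that, for all indices i and j, if Sᵢ ≠ Sⱼ then (Sᵢ Δ Sⱼ) ∩ Δ ≠ ∅. -/
open scoped symmDiff

lemma distinguish_aux {D ι : Type} (S : ι → Set D) (A : Finset ι) :
    ∃ Δ : Finset D, Δ.card ≤ A.card - 1 ∧
      ∀ i ∈ A, ∀ j ∈ A, S i ≠ S j → ((S i ∆ S j) ∩ (Δ : Set D)).Nonempty := by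
  classical
  induction A using Finset.strongInduction with
  | _ A ih =>
    by_cases h : ∀ i ∈ A, ∀ j ∈ A, S i = S j
    · exact ⟨∅, by simp, fun i hi j hj hne => absurd (h i hi j hj) hne⟩
    · push_neg at h
      obtain ⟨i0, hi0, j0, hj0, hne⟩ := h
      have hd : (S i0 ∆ S j0).Nonempty := by
        rw [Set.symmDiff_nonempty]; exact hne
      obtain ⟨d, hd⟩ := hd
      have key : ∃ i1 ∈ A, ∃ j1 ∈ A, d ∈ S i1 ∧ d ∉ S j1 := by
        rcases Set.mem_symmDiff.mp hd with ⟨h1, h2⟩ | ⟨h1, h2⟩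
        · exact ⟨i0, hi0, j0, hj0, h1, h2⟩
        · exact ⟨j0, hj0, i0, hi0, h1, h2⟩
      obtain ⟨i1, hi1, j1, hj1, hdi1, hdj1⟩ := key
      set A₁ := A.filter (fun i => d ∈ S i) with hA₁def
      set A₂ := A.filter (fun i => d ∉ S i) with hA₂def
      have hA₁ : A₁ ⊂ A := by
        refine ⟨Finset.filter_subset _ _, fun hsub => ?_⟩
        have := hsub hj1
        rw [hA₁def, Finset.mem_filter] at this
        exact hdj1 this.2
      have hA₂ : A₂ ⊂ A := by
        refine ⟨Finset.filter_subset _ _, fun hsub => ?_⟩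
        have := hsub hi1
        rw [hA₂def, Finset.mem_filter] at this
        exact this.2 hdi1
      obtain ⟨Δ₁, hc1, hs1⟩ := ih A₁ hA₁
      obtain ⟨Δ₂, hc2, hs2⟩ := ih A₂ hA₂
      refine ⟨insert d (Δ₁ ∪ Δ₂), ?_, ?_⟩
      · have h1 : 1 ≤ A₁.card :=
          Finset.card_pos.mpr ⟨i1, Finset.mem_filter.mpr ⟨hi1, hdi1⟩⟩
        have h2 : 1 ≤ A₂.card :=
          Finset.card_pos.mpr ⟨j1, Finset.mem_filter.mpr ⟨hj1, hdj1⟩⟩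
        have hsum : A₁.card + A₂.card = A.card :=
          Finset.card_filter_add_card_filter_not _
        have := Finset.card_insert_le d (Δ₁ ∪ Δ₂)
        have := Finset.card_union_le Δ₁ Δ₂
        omega
      · intro i hi j hj hne2
        by_cases hdi : d ∈ S i <;> by_cases hdj : d ∈ S j
        · obtain ⟨x, hx1, hx2⟩ := hs1 i (Finset.mem_filter.mpr ⟨hi, hdi⟩)
            j (Finset.mem_filter.mpr ⟨hj, hdj⟩) hne2
          exact ⟨x, hx1, by simp_all⟩
        · exact ⟨d, Set.mem_symmDiff.mpr (Or.inl ⟨hdi, hdj⟩), by simp⟩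
        · exact ⟨d, Set.mem_symmDiff.mpr (Or.inr ⟨hdj, hdi⟩), by simp⟩
        · obtain ⟨x, hx1, hx2⟩ := hs2 i (Finset.mem_filter.mpr ⟨hi, hdi⟩)
            j (Finset.mem_filter.mpr ⟨hj, hdj⟩) hne2
          exact ⟨x, hx1, by simp_all⟩

/-- For every finite family `S₁,…,Sₙ` of subsets of a set `D`, there
exists a subset `Δ ⊆ D` with `|Δ| ≤ n − 1` such that, for all indices `i` and `j`,
if `Sᵢ ≠ Sⱼ` then `(Sᵢ Δ Sⱼ) ∩ Δ ≠ ∅`. -/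
theorem distinguish_small_separating_set {D : Type} (n : ℕ) (S : Fin n → Set D) :
    ∃ Δ : Finset D, Δ.card ≤ n - 1 ∧
      ∀ i j : Fin n, S i ≠ S j → ((S i ∆ S j) ∩ (Δ : Set D)).Nonempty := by
  obtain ⟨Δ, hc, hs⟩ := distinguish_aux S Finset.univ
  refine ⟨Δ, by simpa using hc, fun i j => hs i (Finset.mem_univ i) j (Finset.mem_univ j)⟩
end

section
/- Let (D,M) be a 3LQS-interpretation, D* ⊆ D, d* ∈ D*, V'₁ a set of sort-1 variables, and let (D*,M*) = Rel(M, D*, d*, V'₁). Then for all sort-1 variables X and Y such that MX ≠ MY implies (MX Δ MY) ∩ D* ≠ ∅, one has M*X = M*Y if and only if MX = MY. -/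
open scoped symmDiff

/-- A 3LQS-interpretation over a (nonempty) domain `D`: an assignment of an element
of `D` to each sort-0 variable, a subset of `D` to each sort-1 variable, and a
collection of subsets of `D` to each sort-2 variable. -/
structure Interp (V0 V1 V2 D : Type) where
  m0 : V0 → D
  m1 : V1 → Set D
  m2 : V2 → Set (Set D)

open Classical in
/-- The relativized interpretation `Rel(M, D*, d*, V'₁)`. -/
noncomputable def Interp.rel {V0 V1 V2 D : Type} (I : Interp V0 V1 V2 D)
    (Dstar : Set D) (dstar : D) (V1' : Set V1) : Interp V0 V1 V2 D where
  m0 := fun x => if I.m0 x ∈ Dstar then I.m0 x else dstar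
  m1 := fun X => I.m1 X ∩ Dstar
  m2 := fun A =>
    ((I.m2 A ∩ {S | S ⊆ Dstar}) \ {S | ∃ X ∈ V1', I.m1 X ∩ Dstar = S}) ∪
      {S | ∃ X ∈ V1', I.m1 X ∈ I.m2 A ∧ I.m1 X ∩ Dstar = S}

/-- if `MX ≠ MY` implies `(MX Δ MY) ∩ D* ≠ ∅`, then
`M*X = M*Y ↔ MX = MY`. -/
theorem stmt1 {V0 V1 V2 D : Type} [Nonempty D] (I : Interp V0 V1 V2 D)
    (Dstar : Set D) (dstar : D) (hds : dstar ∈ Dstar) (V1' : Set V1)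
    (X Y : V1)
    (hXY : I.m1 X ≠ I.m1 Y → ((I.m1 X ∆ I.m1 Y) ∩ Dstar).Nonempty) :
    (I.rel Dstar dstar V1').m1 X = (I.rel Dstar dstar V1').m1 Y ↔ I.m1 X = I.m1 Y := by
  simp only [Interp.rel]
  constructor
  · intro h
    by_contra hne
    obtain ⟨d, hd, hdD⟩ := hXY hne
    rcases hd with ⟨hX, hY⟩ | ⟨hY, hX⟩
    · exact hY (h ▸ Set.mem_inter hX hdD).1
    · have : d ∈ I.m1 X ∩ Dstar := by rw [h]; exact Set.mem_inter hY hdD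
      exact hX this.1
  · intro h; rw [h]
end

section
/- Let (D,M) be a 3LQS-interpretation, D* ⊆ D, d* ∈ D*, V'₁ a set of sort-1 variables, and let (D*,M*) = Rel(M, D*, d*, V'₁). Assume that for all X, Y ∈ V'₁ with MX ≠ MY one has (MX Δ MY) ∩ D* ≠ ∅. Then for every X ∈ V'₁ and every sort-2 variable A, M*X ∈ M*A if and only if MX ∈ MA. -/
open scoped symmDiff

/-- if all `X, Y ∈ V'₁` with `MX ≠ MY` satisfy `(MX Δ MY) ∩ D* ≠ ∅`,
then for every `X ∈ V'₁` and sort-2 variable `A`, `M*X ∈ M*A ↔ MX ∈ MA`. -/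
theorem stmt2 {V0 V1 V2 D : Type} [Nonempty D] (I : Interp V0 V1 V2 D)
    (Dstar : Set D) (dstar : D) (hds : dstar ∈ Dstar) (V1' : Set V1)
    (hsep : ∀ X ∈ V1', ∀ Y ∈ V1', I.m1 X ≠ I.m1 Y → ((I.m1 X ∆ I.m1 Y) ∩ Dstar).Nonempty)
    (X : V1) (hX : X ∈ V1') (A : V2) :
    (I.rel Dstar dstar V1').m1 X ∈ (I.rel Dstar dstar V1').m2 A ↔ I.m1 X ∈ I.m2 A := by
  have key : ∀ Y ∈ V1', I.m1 Y ∩ Dstar = I.m1 X ∩ Dstar → I.m1 Y = I.m1 X := by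
    intro Y hY h
    by_contra hne
    obtain ⟨d, hd, hdD⟩ := hsep Y hY X hX hne
    rcases hd with ⟨h1, h2⟩ | ⟨h1, h2⟩
    · exact h2 (h ▸ Set.mem_inter h1 hdD).1
    · exact h2 (h ▸ (Set.mem_inter h1 hdD : d ∈ I.m1 X ∩ Dstar)).1
  simp only [Interp.rel, Set.mem_union, Set.mem_diff, Set.mem_setOf_eq]
  constructor
  · rintro (⟨_, hnot⟩ | ⟨Y, hY, hYA, hYX⟩)
    · exact absurd ⟨X, hX, rfl⟩ hnot
    · exact (key Y hY hYX) ▸ hYA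
  · intro h
    exact Or.inr ⟨X, hX, h, rfl⟩
end

section
/- Let (D,M) be a 3LQS-interpretation, D* ⊆ D, d* ∈ D*, V'₁ a set of sort-1 variables, let z₁,…,zₙ be sort-0 variables and u₁,…,uₙ ∈ D*. Write M^z = M[z₁/u₁,…,zₙ/uₙ], M^{z,*} = Rel(M^z, D*, d*, V'₁), and M^{*,z} = M*[z₁/u₁,…,zₙ/uₙ] where (D*,M*) = Rel(M, D*, d*, V'₁). Then (i) M^{*,z}x = M^{z,*}x for every sort-0 variable x, and (ii) M^{z,*}X = M^{*,z}X for every sort-1 variable X. -/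
open scoped symmDiff

open Classical in
/-- Simultaneous update `M[v₁/w₁,…,vₙ/wₙ]` of an assignment. -/
noncomputable def updF {V D : Type} (M : V → D) {n : ℕ} (z : Fin n → V) (u : Fin n → D) :
    V → D :=
  fun x => if h : ∃ i, z i = x then u (Classical.choose h) else M x

/-- `M[z₁/u₁,…,zₙ/uₙ]`, updating the sort-0 component. -/
noncomputable def Interp.upd0 {V0 V1 V2 D : Type} (I : Interp V0 V1 V2 D) {n : ℕ}
    (z : Fin n → V0) (u : Fin n → D) : Interp V0 V1 V2 D where
  m0 := updF I.m0 z u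
  m1 := I.m1
  m2 := I.m2

/-- with `u₁,…,uₙ ∈ D*`,
(i) `M^{*,z}x = M^{z,*}x` for every sort-0 variable `x`, and
(ii) `M^{z,*}X = M^{*,z}X` for every sort-1 variable `X`. -/
theorem stmt3 {V0 V1 V2 D : Type} [Nonempty D] (I : Interp V0 V1 V2 D)
    (Dstar : Set D) (dstar : D) (hds : dstar ∈ Dstar) (V1' : Set V1)
    {n : ℕ} (z : Fin n → V0) (u : Fin n → D) (hu : ∀ i, u i ∈ Dstar) :
    (∀ x : V0,
      ((I.rel Dstar dstar V1').upd0 z u).m0 x = ((I.upd0 z u).rel Dstar dstar V1').m0 x) ∧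
    (∀ X : V1,
      ((I.upd0 z u).rel Dstar dstar V1').m1 X = ((I.rel Dstar dstar V1').upd0 z u).m1 X) := by
  classical
  constructor
  · intro x
    simp only [Interp.upd0, Interp.rel, updF]
    by_cases h : ∃ i, z i = x
    · have hc : (if h : ∃ i, z i = x then u (Classical.choose h) else I.m0 x) ∈ Dstar := by
        rw [dif_pos h]; exact hu _
      simp only [dif_pos h, if_pos (hu _)]
    · have hc : ((if h : ∃ i, z i = x then u (Classical.choose h) else I.m0 x) ∈ Dstar)
          ↔ I.m0 x ∈ Dstar := by rw [dif_neg h]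
      rcases em (I.m0 x ∈ Dstar) with h2 | h2
      · simp only [dif_neg h, if_pos h2]
      · simp only [dif_neg h, if_neg h2]
  · intro X
    rfl
end

section
/- Let (D,M) be a 3LQS-interpretation, D* ⊆ D, d* ∈ D*, V'₁ a set of sort-1 variables, let Z₁,…,Z_m be sort-1 variables not in V'₁, and let U₁,…,U_m ∈ 𝒫(D*) \ {M*X : X ∈ V'₁}, where (D*,M*) = Rel(M, D*, d*, V'₁). Then the two interpretations Rel(M[Z₁/U₁,…,Z_m/U_m], D*, d*, V'₁ ∪ {Z₁,…,Z_m}) and M*[Z₁/U₁,…,Z_m/U_m] coincide, i.e., they assign the same value to every variable of every sort. -/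
open scoped symmDiff

/-- `M[Z₁/U₁,…,Z_m/U_m]`, updating the sort-1 component. -/
noncomputable def Interp.upd1 {V0 V1 V2 D : Type} (I : Interp V0 V1 V2 D) {m : ℕ}
    (Z : Fin m → V1) (U : Fin m → Set D) : Interp V0 V1 V2 D where
  m0 := I.m0
  m1 := updF I.m1 Z U
  m2 := I.m2

/-- for `Z₁,…,Z_m ∉ V'₁` and `U₁,…,U_m ∈ 𝒫(D*) \ {M*X : X ∈ V'₁}`,
the interpretations `Rel(M[Z/U], D*, d*, V'₁ ∪ {Z₁,…,Z_m})` and `M*[Z/U]` coincide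
on every variable of every sort. -/
theorem stmt4 {V0 V1 V2 D : Type} [Nonempty D] (I : Interp V0 V1 V2 D)
    (Dstar : Set D) (dstar : D) (hds : dstar ∈ Dstar) (V1' : Set V1)
    {m : ℕ} (Z : Fin m → V1) (U : Fin m → Set D)
    (hZ : ∀ i, Z i ∉ V1')
    (hUsub : ∀ i, U i ⊆ Dstar)
    (hUnew : ∀ i, U i ∉ {S | ∃ X ∈ V1', (I.rel Dstar dstar V1').m1 X = S}) :
    (∀ x : V0,
      ((I.upd1 Z U).rel Dstar dstar (V1' ∪ Set.range Z)).m0 x =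
        ((I.rel Dstar dstar V1').upd1 Z U).m0 x) ∧
    (∀ X : V1,
      ((I.upd1 Z U).rel Dstar dstar (V1' ∪ Set.range Z)).m1 X =
        ((I.rel Dstar dstar V1').upd1 Z U).m1 X) ∧
    (∀ A : V2,
      ((I.upd1 Z U).rel Dstar dstar (V1' ∪ Set.range Z)).m2 A =
        ((I.rel Dstar dstar V1').upd1 Z U).m2 A) := by
  -- key facts about updF
  have hfix : ∀ X ∈ V1', updF I.m1 Z U X = I.m1 X := by
    intro X hX
    have h : ¬∃ i, Z i = X := by
      rintro ⟨i, rfl⟩; exact hZ i hX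
    simp [updF, h]
  have hrange : ∀ i : Fin m, ∃ j, updF I.m1 Z U (Z i) = U j := by
    intro i
    have h : ∃ k, Z k = Z i := ⟨i, rfl⟩
    exact ⟨Classical.choose h, dif_pos h⟩
  refine ⟨fun x => rfl, ?_, ?_⟩
  · intro X
    show updF I.m1 Z U X ∩ Dstar = updF (fun Y => I.m1 Y ∩ Dstar) Z U X
    unfold updF
    by_cases h : ∃ i, Z i = X
    · simp only [dif_pos h]
      exact Set.inter_eq_left.mpr (hUsub _)
    · simp only [dif_neg h]
  · intro A
    show ((I.m2 A ∩ {S | S ⊆ Dstar}) \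
        {S | ∃ X ∈ V1' ∪ Set.range Z, updF I.m1 Z U X ∩ Dstar = S}) ∪
        {S | ∃ X ∈ V1' ∪ Set.range Z, updF I.m1 Z U X ∈ I.m2 A ∧
          updF I.m1 Z U X ∩ Dstar = S} =
      ((I.m2 A ∩ {S | S ⊆ Dstar}) \ {S | ∃ X ∈ V1', I.m1 X ∩ Dstar = S}) ∪
        {S | ∃ X ∈ V1', I.m1 X ∈ I.m2 A ∧ I.m1 X ∩ Dstar = S}
    ext S
    simp only [Set.mem_union, Set.mem_diff, Set.mem_inter_iff, Set.mem_setOf_eq,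
      Set.mem_range]
    constructor
    · rintro (⟨⟨h1, h2⟩, h3⟩ | ⟨X, hX | ⟨i, rfl⟩, h1, h2⟩)
      · left
        refine ⟨⟨h1, h2⟩, ?_⟩
        rintro ⟨X, hX, hS⟩
        exact h3 ⟨X, Or.inl hX, by rw [hfix X hX]; exact hS⟩
      · right; exact ⟨X, hX, by rwa [hfix X hX] at h1, by rw [← hfix X hX]; exact h2⟩
      · -- X = Z i
        obtain ⟨j, hj⟩ := hrange i
        rw [hj] at h1 h2
        rw [Set.inter_eq_left.mpr (hUsub j)] at h2
        left
        refine ⟨⟨h2 ▸ h1, h2 ▸ hUsub j⟩, ?_⟩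
        rintro ⟨X, hX, hS⟩
        exact hUnew j ⟨X, hX, by show I.m1 X ∩ Dstar = U j; rw [hS, h2]⟩
    · rintro (⟨⟨h1, h2⟩, h3⟩ | ⟨X, hX, h1, h2⟩)
      · by_cases h : ∃ X ∈ V1' ∪ Set.range Z, updF I.m1 Z U X ∩ Dstar = S
        · obtain ⟨X, hX | ⟨i, rfl⟩, hS⟩ := h
          · exact absurd ⟨X, hX, by rw [← hfix X hX]; exact hS⟩ h3
          · obtain ⟨j, hj⟩ := hrange i
            rw [hj, Set.inter_eq_left.mpr (hUsub j)] at hS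
            right
            exact ⟨Z i, Or.inr ⟨i, rfl⟩, by rw [hj, hS]; exact h1,
              by rw [hj, Set.inter_eq_left.mpr (hUsub j), hS]⟩
        · exact Or.inl ⟨⟨h1, h2⟩, h⟩
      · right
        exact ⟨X, Or.inl hX, by rw [hfix X hX]; exact h1,
          by rw [hfix X hX]; exact h2⟩
end

section
/- Let (D,M) be a 3LQS-interpretation, D* ⊆ D, d* ∈ D*, V'₁ a set of sort-1 variables, and (D*,M*) = Rel(M, D*, d*, V'₁). Let (∀z₁)…(∀zₙ)φ₀ be a level-1 quantified atom, where φ₀ is a propositional combination of level-0 atoms, such that Mx ∈ D* for every sort-0 variable x occurring free in φ₀. If (D,M) ⊨ (∀z₁)…(∀zₙ)φ₀, then (D*,M*) ⊨ (∀z₁)…(∀zₙ)φ₀. -/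
open scoped symmDiff

/-- Propositional combinations of level-0 atoms (`x = y` and `x ∈ X`). -/
inductive F0 (V0 V1 : Type) : Type where
  | eq : V0 → V0 → F0 V0 V1
  | mem : V0 → V1 → F0 V0 V1
  | not : F0 V0 V1 → F0 V0 V1
  | and : F0 V0 V1 → F0 V0 V1 → F0 V0 V1
  | or : F0 V0 V1 → F0 V0 V1 → F0 V0 V1

/-- Satisfaction of a propositional combination of level-0 atoms. -/
def sat0 {V0 V1 D : Type} (m0 : V0 → D) (m1 : V1 → Set D) : F0 V0 V1 → Prop
  | .eq x y => m0 x = m0 y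
  | .mem x X => m0 x ∈ m1 X
  | .not φ => ¬ sat0 m0 m1 φ
  | .and φ ψ => sat0 m0 m1 φ ∧ sat0 m0 m1 ψ
  | .or φ ψ => sat0 m0 m1 φ ∨ sat0 m0 m1 ψ

/-- Sort-0 variables occurring in a level-0 formula. -/
def F0.v0 {V0 V1 : Type} : F0 V0 V1 → Set V0
  | .eq x y => {x, y}
  | .mem x _ => {x}
  | .not φ => φ.v0
  | .and φ ψ => φ.v0 ∪ ψ.v0
  | .or φ ψ => φ.v0 ∪ ψ.v0


lemma sat0_iff_aux {V0 V1 D : Type} (m0 m0' : V0 → D) (m1 : V1 → Set D) (Dstar : Set D)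
    (φ : F0 V0 V1) (h : ∀ x ∈ φ.v0, m0' x = m0 x ∧ m0 x ∈ Dstar) :
    sat0 m0 m1 φ ↔ sat0 m0' (fun X => m1 X ∩ Dstar) φ := by
  induction φ with
  | eq x y =>
    have hx := h x (by simp [F0.v0])
    have hy := h y (by simp [F0.v0])
    simp [sat0, hx.1, hy.1]
  | mem x X =>
    have hx := h x (by simp [F0.v0])
    simp only [sat0, hx.1, Set.mem_inter_iff]
    exact ⟨fun hm => ⟨hm, hx.2⟩, fun hm => hm.1⟩
  | not φ ih =>
    simp only [sat0]
    exact not_congr (ih h)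
  | and φ ψ ihφ ihψ =>
    simp only [sat0]
    exact and_congr (ihφ fun x hx => h x (Or.inl hx)) (ihψ fun x hx => h x (Or.inr hx))
  | or φ ψ ihφ ihψ =>
    simp only [sat0]
    exact or_congr (ihφ fun x hx => h x (Or.inl hx)) (ihψ fun x hx => h x (Or.inr hx))

/-- if `Mx ∈ D*` for every sort-0 variable occurring free in `φ₀` and
`(D,M) ⊨ (∀z₁)…(∀zₙ)φ₀`, then `(D*,M*) ⊨ (∀z₁)…(∀zₙ)φ₀` (where in `M*` the
quantified variables range over `D*`). -/
theorem stmt5 {V0 V1 V2 D : Type} [Nonempty D] (I : Interp V0 V1 V2 D)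
    (Dstar : Set D) (dstar : D) (hds : dstar ∈ Dstar) (V1' : Set V1)
    {n : ℕ} (z : Fin n → V0) (φ0 : F0 V0 V1)
    (hfree : ∀ x ∈ φ0.v0, x ∉ Set.range z → I.m0 x ∈ Dstar)
    (hsat : ∀ u : Fin n → D, sat0 (updF I.m0 z u) I.m1 φ0) :
    ∀ u : Fin n → D, (∀ i, u i ∈ Dstar) →
      sat0 (updF (I.rel Dstar dstar V1').m0 z u) (I.rel Dstar dstar V1').m1 φ0 := by
  intro u hu
  have hm1 : (I.rel Dstar dstar V1').m1 = fun X => I.m1 X ∩ Dstar := rfl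
  rw [hm1]
  rw [← sat0_iff_aux (updF I.m0 z u) _ I.m1 Dstar φ0 ?_]
  · exact hsat u
  · intro x hx
    unfold updF
    by_cases hex : ∃ i, z i = x
    · simp [hex, hu]
    · have hnr : x ∉ Set.range z := by
        rintro ⟨i, hi⟩; exact hex ⟨i, hi⟩
      have hD := hfree x hx hnr
      simp [hex, Interp.rel, hD]
end

section
/- Let φ be a modal formula, let K = (W,h) be an S5-Kripke model, and let (W,M) be a 3LQS-interpretation over the domain W such that MX_p = h(p) for every propositional letter p occurring in φ and such that (W,M) satisfies the translation constraints TSc₂(ψ) for every subformula ψ of φ. Then for every world w ∈ W and every subformula ψ of φ: K, w ⊨ ψ if and only if w ∈ MX_ψ. -/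
/-- Modal formulas over a set `P` of propositional letters. -/
inductive MF (P : Type) : Type where
  | lit : P → MF P
  | not : MF P → MF P
  | and : MF P → MF P → MF P
  | or : MF P → MF P → MF P
  | box : MF P → MF P
  | dia : MF P → MF P

/-- Satisfaction in an S5-Kripke model `(W, h)` at a world `w` (the accessibility
relation is total). -/
def msat {P W : Type} (h : P → Set W) : W → MF P → Prop
  | w, .lit p => w ∈ h p
  | w, .not φ => ¬ msat h w φ
  | w, .and φ ψ => msat h w φ ∧ msat h w ψ
  | w, .or φ ψ => msat h w φ ∨ msat h w ψ
  | _, .box φ => ∀ v, msat h v φ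
  | _, .dia φ => ∃ v, msat h v φ

/-- The set of subformulas of a modal formula. -/
def subf {P : Type} : MF P → Set (MF P)
  | .lit p => {.lit p}
  | .not φ => insert (.not φ) (subf φ)
  | .and φ ψ => insert (.and φ ψ) (subf φ ∪ subf ψ)
  | .or φ ψ => insert (.or φ ψ) (subf φ ∪ subf ψ)
  | .box φ => insert (.box φ) (subf φ)
  | .dia φ => insert (.dia φ) (subf φ)

/-- The translation constraints `TSc₂(ψ)`, expressed semantically for a 3LQS
interpretation with domain `D` assigning to each sort-1 variable `X_ψ` the set
`M1 ψ ⊆ D` (sort-0 quantified variables range over `D`). -/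
def tsc {P D : Type} (M1 : MF P → Set D) : MF P → Prop
  | .lit _ => True
  | .not φ => (∀ z : D, z ∈ M1 (.not φ) ↔ z ∉ M1 φ) ∧ tsc M1 φ
  | .and φ ψ => (∀ z : D, z ∈ M1 (.and φ ψ) ↔ (z ∈ M1 φ ∧ z ∈ M1 ψ)) ∧ tsc M1 φ ∧ tsc M1 ψ
  | .or φ ψ => (∀ z : D, z ∈ M1 (.or φ ψ) ↔ (z ∈ M1 φ ∨ z ∈ M1 ψ)) ∧ tsc M1 φ ∧ tsc M1 ψ
  | .box φ => ((∀ z : D, z ∈ M1 φ) → ∀ z : D, z ∈ M1 (.box φ)) ∧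
      ((¬ ∀ z : D, z ∈ M1 φ) → ∀ z : D, z ∉ M1 (.box φ)) ∧ tsc M1 φ
  | .dia φ => ((¬ ∀ z : D, z ∉ M1 φ) → ∀ z : D, z ∈ M1 (.dia φ)) ∧
      ((∀ z : D, z ∉ M1 φ) → ∀ z : D, z ∉ M1 (.dia φ)) ∧ tsc M1 φ

lemma self_mem_subf {P : Type} (ψ : MF P) : ψ ∈ subf ψ := by
  cases ψ <;> simp [subf]

lemma subf_trans {P : Type} (φ : MF P) :
    ∀ ψ ∈ subf φ, ∀ χ ∈ subf ψ, χ ∈ subf φ := by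
  induction φ with
  | lit p =>
    intro ψ hψ χ hχ
    simp only [subf, Set.mem_singleton_iff] at hψ
    subst hψ; exact hχ
  | not φ ih =>
    intro ψ hψ χ hχ
    rcases hψ with rfl | hψ
    · exact hχ
    · exact Or.inr (ih ψ hψ χ hχ)
  | and φ₁ φ₂ ih1 ih2 =>
    intro ψ hψ χ hχ
    rcases hψ with rfl | hψ | hψ
    · exact hχ
    · exact Or.inr (Or.inl (ih1 ψ hψ χ hχ))
    · exact Or.inr (Or.inr (ih2 ψ hψ χ hχ))
  | or φ₁ φ₂ ih1 ih2 =>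
    intro ψ hψ χ hχ
    rcases hψ with rfl | hψ | hψ
    · exact hχ
    · exact Or.inr (Or.inl (ih1 ψ hψ χ hχ))
    · exact Or.inr (Or.inr (ih2 ψ hψ χ hχ))
  | box φ ih =>
    intro ψ hψ χ hχ
    rcases hψ with rfl | hψ
    · exact hχ
    · exact Or.inr (ih ψ hψ χ hχ)
  | dia φ ih =>
    intro ψ hψ χ hχ
    rcases hψ with rfl | hψ
    · exact hχ
    · exact Or.inr (ih ψ hψ χ hχ)

lemma stmt13_aux {P W : Type} [Nonempty W] (h : P → Set W)
    (M1 : MF P → Set W) (ψ : MF P)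
    (hbase : ∀ p : P, MF.lit p ∈ subf ψ → M1 (MF.lit p) = h p)
    (htsc : ∀ χ ∈ subf ψ, tsc M1 χ) :
    ∀ w : W, msat h w ψ ↔ w ∈ M1 ψ := by
  induction ψ with
  | lit p =>
    intro w
    rw [hbase p (self_mem_subf _)]
    rfl
  | not φ ih =>
    have ih' := ih (fun p hp => hbase p (Or.inr hp))
      (fun χ hχ => htsc χ (Or.inr hχ))
    have ht := htsc _ (self_mem_subf (MF.not φ))
    intro w
    rw [show msat h w (MF.not φ) = ¬ msat h w φ from rfl, ih' w, ht.1 w]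
  | and φ₁ φ₂ ih1 ih2 =>
    have ih1' := ih1 (fun p hp => hbase p (Or.inr (Or.inl hp)))
      (fun χ hχ => htsc χ (Or.inr (Or.inl hχ)))
    have ih2' := ih2 (fun p hp => hbase p (Or.inr (Or.inr hp)))
      (fun χ hχ => htsc χ (Or.inr (Or.inr hχ)))
    have ht := htsc _ (self_mem_subf (MF.and φ₁ φ₂))
    intro w
    rw [show msat h w (MF.and φ₁ φ₂) = (msat h w φ₁ ∧ msat h w φ₂) from rfl,
      ih1' w, ih2' w, ht.1 w]
  | or φ₁ φ₂ ih1 ih2 =>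
    have ih1' := ih1 (fun p hp => hbase p (Or.inr (Or.inl hp)))
      (fun χ hχ => htsc χ (Or.inr (Or.inl hχ)))
    have ih2' := ih2 (fun p hp => hbase p (Or.inr (Or.inr hp)))
      (fun χ hχ => htsc χ (Or.inr (Or.inr hχ)))
    have ht := htsc _ (self_mem_subf (MF.or φ₁ φ₂))
    intro w
    rw [show msat h w (MF.or φ₁ φ₂) = (msat h w φ₁ ∨ msat h w φ₂) from rfl,
      ih1' w, ih2' w, ht.1 w]
  | box φ ih =>
    have ih' := ih (fun p hp => hbase p (Or.inr hp))
      (fun χ hχ => htsc χ (Or.inr hχ))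
    have ht := htsc _ (self_mem_subf (MF.box φ))
    intro w
    show (∀ v, msat h v φ) ↔ _
    constructor
    · intro hall
      exact ht.1 (fun z => (ih' z).mp (hall z)) w
    · intro hw v
      by_contra hv
      exact ht.2.1 (fun hall => hv ((ih' v).mpr (hall v))) w hw
  | dia φ ih =>
    have ih' := ih (fun p hp => hbase p (Or.inr hp))
      (fun χ hχ => htsc χ (Or.inr hχ))
    have ht := htsc _ (self_mem_subf (MF.dia φ))
    intro w
    show (∃ v, msat h v φ) ↔ _
    constructor
    · intro ⟨v, hv⟩
      exact ht.1 (fun hall => hall v ((ih' v).mp hv)) w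
    · intro hw
      by_contra hno
      push_neg at hno
      exact ht.2.1 (fun z hz => hno z ((ih' z).mpr hz)) w hw

/-- if the 3LQS-interpretation `(W,M)` agrees with `h` on the
propositional letters occurring in `φ` and satisfies the translation constraints
`TSc₂(ψ)` for every subformula `ψ` of `φ`, then for every world `w` and every
subformula `ψ` of `φ`: `K, w ⊨ ψ` iff `w ∈ MX_ψ`. -/
theorem stmt13 {P W : Type} [Nonempty W] (h : P → Set W) (φ : MF P)
    (M1 : MF P → Set W)
    (hbase : ∀ p : P, MF.lit p ∈ subf φ → M1 (MF.lit p) = h p)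
    (htsc : ∀ ψ ∈ subf φ, tsc M1 ψ) :
    ∀ w : W, ∀ ψ ∈ subf φ, (msat h w ψ ↔ w ∈ M1 ψ) := by
  intro w ψ hψ
  exact stmt13_aux h M1 ψ
    (fun p hp => hbase p (subf_trans φ ψ hψ _ hp))
    (fun χ hχ => htsc χ (subf_trans φ ψ hψ _ hχ)) w
end

section
/- A modal formula φ is satisfiable in some S5-Kripke model (i.e., there are K = (W,h) and w ∈ W with K, w ⊨ φ) if and only if there exist a 3LQS-interpretation (D,M) and a sort-0 variable x such that (D,M) satisfies TSc₂(φ) together with x ∈ X_φ, where MX_p may be arbitrary for propositional letters p. -/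
lemma tsc_of_msat {P W : Type} (h : P → Set W) (φ : MF P) :
    tsc (fun ψ => {v : W | msat h v ψ}) φ := by
  induction φ with
  | lit p => trivial
  | not φ ih => exact ⟨fun z => Iff.rfl, ih⟩
  | and φ ψ ih1 ih2 => exact ⟨fun z => Iff.rfl, ih1, ih2⟩
  | or φ ψ ih1 ih2 => exact ⟨fun z => Iff.rfl, ih1, ih2⟩
  | box φ ih =>
    refine ⟨fun H z => H, fun H z hz => H hz, ih⟩
  | dia φ ih =>
    refine ⟨fun H z => not_forall_not.mp H, fun H z hz => ?_, ih⟩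
    obtain ⟨v, hv⟩ := hz
    exact H v hv

lemma msat_of_tsc {P D : Type} (M1 : MF P → Set D) (φ : MF P) (ht : tsc M1 φ) :
    ∀ z : D, z ∈ M1 φ ↔ msat (fun p => M1 (.lit p)) z φ := by
  induction φ with
  | lit p => intro z; rfl
  | not φ ih =>
    intro z
    simpa [msat, ih ht.2 z] using ht.1 z
  | and φ ψ ih1 ih2 =>
    intro z
    simpa [msat, ih1 ht.2.1 z, ih2 ht.2.2 z] using ht.1 z
  | or φ ψ ih1 ih2 =>
    intro z
    simpa [msat, ih1 ht.2.1 z, ih2 ht.2.2 z] using ht.1 z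
  | box φ ih =>
    intro z
    obtain ⟨h1, h2, h3⟩ := ht
    constructor
    · intro hz v
      by_contra hv
      have : ¬ ∀ w : D, w ∈ M1 φ := fun H => hv ((ih h3 v).mp (H v))
      exact h2 this z hz
    · intro H
      exact h1 (fun w => (ih h3 w).mpr (H w)) z
  | dia φ ih =>
    intro z
    obtain ⟨h1, h2, h3⟩ := ht
    constructor
    · intro hz
      by_contra hv
      have : ∀ w : D, w ∉ M1 φ := fun w hw => hv ⟨w, (ih h3 w).mp hw⟩
      exact h2 this z hz
    · rintro ⟨v, hv⟩
      exact h1 (not_forall_not.mpr ⟨v, (ih h3 v).mpr hv⟩) z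

/-- a modal formula `φ` is satisfiable in some S5-Kripke model iff
there is a 3LQS-interpretation `(D,M)` and a sort-0 variable `x` (with value
`d = Mx ∈ D`) such that `(D,M)` satisfies `TSc₂(φ)` together with `x ∈ X_φ`. -/
theorem stmt14 {P : Type} (φ : MF P) :
    (∃ (W : Type) (h : P → Set W), Nonempty W ∧ ∃ w : W, msat h w φ) ↔
    (∃ (D : Type) (M1 : MF P → Set D), Nonempty D ∧ tsc M1 φ ∧ ∃ d : D, d ∈ M1 φ) := by
  constructor
  · rintro ⟨W, h, hne, w, hw⟩
    exact ⟨W, fun ψ => {v | msat h v ψ}, hne, tsc_of_msat h φ, w, hw⟩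
  · rintro ⟨D, M1, hne, ht, d, hd⟩
    exact ⟨D, fun p => M1 (.lit p), hne, d, (msat_of_tsc M1 φ ht d).mp hd⟩
end
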